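/- Let R be a topological ring having a basis B of neighborhoods of zero consisting of two-sided ideals, and suppose that R/I is a local ring for every proper ideal I ∈ B. Then the Hausdorff completion of R, i.e., the inverse limit lim←_{I∈B} R/I, is either the zero ring or a local ring. -/
import Mathlib


/-!
STATEMENT 5: Let R be a topological ring having a basis B of neighborhoods of zero
consisting of two-sided ideals, and suppose that R/I is a local ring for every proper
ideal I ∈ B. Then the Hausdorff completion of R, i.e. the inverse limit lim←_{I∈B} R/I,
is either the zero ring or a local ring.

The basis `B` is a set of two-sided ideals of `R` which is a filter basis (nonempty and
downward directed); this is exactly the datum of a linear topology on `R` for which `B` is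
a basis of neighborhoods of `0`.  The quotient `R/I` is the quotient of `R` by the ring
congruence `I.ringCon`.  The inverse limit is realized as the subring of `∏_{I∈B} R/I`
consisting of the compatible families, compatibility being expressed (without choosing
factor maps) by: whenever `J ≤ I` are members of `B` and the `J`-component is the class of
`r ∈ R`, then the `I`-component is also the class of `r`.
-/

universe u

lemma factor_eq {R : Type u} [Ring R] {I J : TwoSidedIdeal R} (h : J ≤ I) {a b : R}
    (hab : (a : J.ringCon.Quotient) = (b : J.ringCon.Quotient)) :
    (a : I.ringCon.Quotient) = (b : I.ringCon.Quotient) := by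
  rw [RingCon.eq] at hab ⊢
  rw [TwoSidedIdeal.rel_iff] at hab ⊢
  exact h hab

/-- The inverse limit `lim←_{I ∈ B} R/I`, as a subring of the product `∏_{I ∈ B} R/I`. -/
def completionSubring (R : Type u) [Ring R] (B : Set (TwoSidedIdeal R)) :
    Subring (∀ I : B, (I : TwoSidedIdeal R).ringCon.Quotient) where
  carrier := {x | ∀ (I J : B), (J : TwoSidedIdeal R) ≤ I →
    ∀ r : R, x J = (r : (J : TwoSidedIdeal R).ringCon.Quotient) → x I = r}
  zero_mem' := by
    intro I J hJI r hr
    exact factor_eq hJI (hr : ((0 : R) : (J : TwoSidedIdeal R).ringCon.Quotient) = r)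
  one_mem' := by
    intro I J hJI r hr
    exact factor_eq hJI (hr : ((1 : R) : (J : TwoSidedIdeal R).ringCon.Quotient) = r)
  add_mem' := by
    intro x y hx hy I J hJI r hr
    obtain ⟨a, ha⟩ := Quotient.mk''_surjective (x J)
    have ha' : (a : (J : TwoSidedIdeal R).ringCon.Quotient) = x J := ha
    have h1 : (a : (J : TwoSidedIdeal R).ringCon.Quotient) + y J = r := by
      rw [ha']; exact hr
    have hyJ : y J = ((r - a : R) : (J : TwoSidedIdeal R).ringCon.Quotient) := by
      have := eq_sub_of_add_eq' h1
      exact this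
    have hxI := hx I J hJI a ha'.symm
    have hyI := hy I J hJI (r - a) hyJ
    show x I + y I = _
    rw [hxI, hyI]
    show ((a + (r - a) : R) : (I : TwoSidedIdeal R).ringCon.Quotient) = r
    rw [add_sub_cancel]
  neg_mem' := by
    intro x hx I J hJI r hr
    have h1 : -(x J) = (r : (J : TwoSidedIdeal R).ringCon.Quotient) := hr
    have hxJ : x J = ((-r : R) : (J : TwoSidedIdeal R).ringCon.Quotient) := by
      show x J = -(r : (J : TwoSidedIdeal R).ringCon.Quotient)
      exact neg_eq_iff_eq_neg.mp h1
    have hxI := hx I J hJI (-r) hxJ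
    show -(x I) = _
    rw [hxI]
    show -((-r : R) : (I : TwoSidedIdeal R).ringCon.Quotient) = r
    rw [show (((-r : R)) : (I : TwoSidedIdeal R).ringCon.Quotient)
      = -(r : (I : TwoSidedIdeal R).ringCon.Quotient) from rfl, neg_neg]
  mul_mem' := by
    intro x y hx hy I J hJI r hr
    obtain ⟨a, ha⟩ := Quotient.mk''_surjective (x J)
    obtain ⟨b, hb⟩ := Quotient.mk''_surjective (y J)
    have ha' : (a : (J : TwoSidedIdeal R).ringCon.Quotient) = x J := ha
    have hb' : (b : (J : TwoSidedIdeal R).ringCon.Quotient) = y J := hb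
    have hxI := hx I J hJI a ha'.symm
    have hyI := hy I J hJI b hb'.symm
    have hab : ((a * b : R) : (J : TwoSidedIdeal R).ringCon.Quotient) = r := by
      show (a : (J : TwoSidedIdeal R).ringCon.Quotient) * b = r
      rw [ha', hb']; exact hr
    have := factor_eq hJI hab
    show x I * y I = _
    rw [hxI, hyI]
    exact this


section Aux

variable {R : Type u} [Ring R] {B : Set (TwoSidedIdeal R)}

lemma mem_iff (x : ∀ I : B, (I : TwoSidedIdeal R).ringCon.Quotient) :
    x ∈ completionSubring R B ↔ ∀ (I J : B), (J : TwoSidedIdeal R) ≤ I →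
      ∀ r : R, x J = (r : (J : TwoSidedIdeal R).ringCon.Quotient) → x I = r := Iff.rfl

/-- If `x` is in the inverse limit and all its components are units, then `x` is a unit. -/
lemma isUnit_of_forall_isUnit (x : completionSubring R B)
    (h : ∀ I : B, IsUnit (x.1 I)) : IsUnit x := by
  -- construct the inverse family
  set y : ∀ I : B, (I : TwoSidedIdeal R).ringCon.Quotient := fun I => ↑(h I).unit⁻¹ with hy
  have hy1 : ∀ I : B, x.1 I * y I = 1 := fun I => (h I).unit.mul_inv
  have hy2 : ∀ I : B, y I * x.1 I = 1 := fun I => (h I).unit.inv_mul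
  have hymem : y ∈ completionSubring R B := by
    intro I J hJI r hr
    obtain ⟨s, hs⟩ := Quotient.mk''_surjective (x.1 J)
    have hs' : (s : (J : TwoSidedIdeal R).ringCon.Quotient) = x.1 J := hs
    have hxI : x.1 I = (s : (I : TwoSidedIdeal R).ringCon.Quotient) := x.2 I J hJI s hs'.symm
    have h1 : ((s * r : R) : (J : TwoSidedIdeal R).ringCon.Quotient)
        = ((1 : R) : (J : TwoSidedIdeal R).ringCon.Quotient) := by
      show (s : (J : TwoSidedIdeal R).ringCon.Quotient) * r = 1
      rw [hs', ← hr]; exact hy1 J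
    have h2 : ((r * s : R) : (J : TwoSidedIdeal R).ringCon.Quotient)
        = ((1 : R) : (J : TwoSidedIdeal R).ringCon.Quotient) := by
      show (r : (J : TwoSidedIdeal R).ringCon.Quotient) * s = 1
      rw [hs', ← hr]; exact hy2 J
    have h1' := factor_eq hJI h1
    have h2' := factor_eq hJI h2
    have hxr : x.1 I * (r : (I : TwoSidedIdeal R).ringCon.Quotient) = 1 := by
      rw [hxI]; exact h1'
    have hrx : (r : (I : TwoSidedIdeal R).ringCon.Quotient) * x.1 I = 1 := by
      rw [hxI]; exact h2'
    -- uniqueness of inverses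
    calc y I = y I * (x.1 I * r) := by rw [hxr, mul_one]
      _ = (y I * x.1 I) * r := by rw [mul_assoc]
      _ = r := by rw [hy2 I, one_mul]
  have hxy : x * ⟨y, hymem⟩ = 1 := by
    ext I; exact hy1 I
  have hyx : (⟨y, hymem⟩ : completionSubring R B) * x = 1 := by
    ext I; exact hy2 I
  exact ⟨⟨x, ⟨y, hymem⟩, hxy, hyx⟩, rfl⟩

/-- Units transfer along the transition maps. -/
lemma isUnit_transfer (x : completionSubring R B) {I J : B}
    (hJI : (J : TwoSidedIdeal R) ≤ I) (h : IsUnit (x.1 J)) : IsUnit (x.1 I) := by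
  obtain ⟨s, hs⟩ := Quotient.mk''_surjective (x.1 J)
  have hs' : (s : (J : TwoSidedIdeal R).ringCon.Quotient) = x.1 J := hs
  obtain ⟨t, ht⟩ := Quotient.mk''_surjective (↑h.unit⁻¹ : (J : TwoSidedIdeal R).ringCon.Quotient)
  have ht' : (t : (J : TwoSidedIdeal R).ringCon.Quotient) = ↑h.unit⁻¹ := ht
  have h1 : ((s * t : R) : (J : TwoSidedIdeal R).ringCon.Quotient)
      = ((1 : R) : (J : TwoSidedIdeal R).ringCon.Quotient) := by
    show (s : (J : TwoSidedIdeal R).ringCon.Quotient) * t = 1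
    rw [hs', ht']; exact h.unit.mul_inv
  have h2 : ((t * s : R) : (J : TwoSidedIdeal R).ringCon.Quotient)
      = ((1 : R) : (J : TwoSidedIdeal R).ringCon.Quotient) := by
    show (t : (J : TwoSidedIdeal R).ringCon.Quotient) * s = 1
    rw [hs', ht']; exact h.unit.inv_mul
  have hxI : x.1 I = (s : (I : TwoSidedIdeal R).ringCon.Quotient) := x.2 I J hJI s hs'.symm
  have h1' := factor_eq hJI h1
  have h2' := factor_eq hJI h2
  refine isUnit_iff_exists.mpr ⟨(t : (I : TwoSidedIdeal R).ringCon.Quotient), ?_, ?_⟩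
  · rw [hxI]; exact h1'
  · rw [hxI]; exact h2'

lemma isUnit_of_top {I : B} (hI : (I : TwoSidedIdeal R) = ⊤)
    (a : (I : TwoSidedIdeal R).ringCon.Quotient) : IsUnit a := by
  obtain ⟨r, hr⟩ := Quotient.mk''_surjective a
  have : a = ((1 : R) : (I : TwoSidedIdeal R).ringCon.Quotient) := by
    rw [← hr]
    show ((r : R) : (I : TwoSidedIdeal R).ringCon.Quotient)
      = ((1 : R) : (I : TwoSidedIdeal R).ringCon.Quotient)
    rw [RingCon.eq, TwoSidedIdeal.rel_iff, hI]
    trivial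
  rw [this]
  exact isUnit_one

end Aux

theorem stmt5 (R : Type u) [Ring R] (B : Set (TwoSidedIdeal R))
    (hne : B.Nonempty)
    (hdir : ∀ I ∈ B, ∀ J ∈ B, ∃ K ∈ B, K ≤ I ∧ K ≤ J)
    (hloc : ∀ I ∈ B, I ≠ ⊤ → IsLocalRing I.ringCon.Quotient) :
    Subsingleton (completionSubring R B) ∨ IsLocalRing (completionSubring R B) := by
  by_cases hsub : Subsingleton (completionSubring R B)
  · exact Or.inl hsub
  · right
    rw [not_subsingleton_iff_nontrivial] at hsub
    refine ⟨fun {a b} hab => ?_⟩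
    by_contra hcon
    push_neg at hcon
    obtain ⟨ha, hb⟩ := hcon
    -- replace b by 1 - a
    have hb' : b = 1 - a := by rw [eq_sub_iff_add_eq, add_comm]; exact hab
    subst hb'
    -- find components where a and 1 - a fail to be units
    have hIa : ∃ I : B, ¬ IsUnit (a.1 I) := by
      by_contra h; push_neg at h; exact ha (isUnit_of_forall_isUnit a h)
    have hIb : ∃ I : B, ¬ IsUnit ((1 - a).1 I) := by
      by_contra h; push_neg at h; exact hb (isUnit_of_forall_isUnit _ h)
    obtain ⟨I, hI⟩ := hIa
    obtain ⟨J, hJ⟩ := hIb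
    obtain ⟨K, hKB, hKI, hKJ⟩ := hdir I I.2 J J.2
    set K' : B := ⟨K, hKB⟩
    -- K is proper
    have hKtop : K ≠ ⊤ := by
      intro htop
      exact hI (isUnit_transfer a (I := I) (J := K') hKI (isUnit_of_top htop _))
    haveI := hloc K hKB hKtop
    rcases IsLocalRing.isUnit_or_isUnit_of_add_one
        (a := a.1 K') (b := (1 - a).1 K') (by
          have : (a + (1 - a)).1 K' = (1 : completionSubring R B).1 K' := by
            rw [add_sub_cancel]
          exact this) with h | h
    · exact hI (isUnit_transfer a (I := I) (J := K') hKI h)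
    · exact hJ (isUnit_transfer (1 - a) (I := J) (J := K') hKJ h)
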